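/- arXiv:1909.04224 — 2 statements merged into one kernel-verified Lean document; each statement's English description precedes it below -/
import Mathlib

section
/- Let S be a finite nonempty state space and A_1, ..., A_n finite nonempty action sets. For every centralized joint policy π^C : S → PMF(A_1 × ⋯ × A_n), there exist a finite signal space Z, a state-independent signal distribution p ∈ PMF(Z), and deterministic decentralized policies f_i : S × Z → A_i for each agent i, such that for every state s, the pushforward of p under the map z ↦ (f_1(s, z), ..., f_n(s, z)) equals π^C(s). That is, every centralized joint policy can be realized by decentralized agents who all observe a common signal drawn from a fixed distribution and respond to it deterministically. -/
/-- Every centralized joint policy `πC : S → PMF (∀ i, A i)` on a finite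
nonempty state space `S` with finite nonempty action sets `A i` can be realized by a
finite signal space `Z`, a state-independent signal distribution `p : PMF Z`, and
deterministic decentralized policies `f i : S → Z → A i`: at every state `s`, the
pushforward of `p` under `z ↦ (fun i => f i s z)` equals `πC s`. -/
theorem centralized_realized_by_signal
    (S : Type*) [Fintype S] [Nonempty S]
    (n : ℕ) (A : Fin n → Type*) [∀ i, Fintype (A i)] [∀ i, Nonempty (A i)]
    (πC : S → PMF (∀ i, A i)) :
    ∃ (Z : Type) (_ : Fintype Z) (p : PMF Z) (f : ∀ i : Fin n, S → Z → A i),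
      ∀ s : S, p.map (fun z => fun i => f i s z) = πC s := by
  classical
  have hsum1 : ∀ t : S, ∑ x : (∀ i, A i), πC t x = 1 := by
    intro t
    rw [← tsum_fintype (L := SummationFilter.unconditional _)]
    exact (πC t).tsum_coe
  have hnorm : ∑ g : S → (∀ i, A i), ∏ t : S, (πC t) (g t) = 1 := by
    rw [← Fintype.prod_sum (fun t (x : (∀ i, A i)) => (πC t) x)]
    simp [hsum1]
  let e : (S → (∀ i, A i)) ≃ Fin (Fintype.card (S → (∀ i, A i))) := Fintype.equivFin (S → (∀ i, A i))
  have hnorm' : ∑ k : Fin (Fintype.card (S → (∀ i, A i))), ∏ t : S, (πC t) (e.symm k t) = 1 := by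
    rw [e.symm.sum_comp (fun g => ∏ t : S, (πC t) (g t))] at *
    exact hnorm
  refine ⟨Fin (Fintype.card (S → (∀ i, A i))), inferInstance, PMF.ofFintype
      (fun k => ∏ t : S, (πC t) (e.symm k t)) hnorm',
      fun i s z => e.symm z s i, fun s => ?_⟩
  ext a
  rw [PMF.map_apply, tsum_fintype]
  trans (∑ g : S → (∀ i, A i), if a = g s then ∏ t : S, (πC t) (g t) else 0)
  · rw [← Equiv.sum_comp e.symm
        (fun g => if a = g s then ∏ t : S, (πC t) (g t) else 0)]
    refine Finset.sum_congr rfl fun b _ => ?_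
    rw [Subsingleton.elim (Classical.propDecidable _)
        (inferInstance : Decidable (a = fun i => e.symm b s i))]
    rfl
  -- split functions at s
  rw [← (Equiv.funSplitAt s (∀ i, A i)).symm.sum_comp
      (fun g => if a = g s then ∏ t : S, (πC t) (g t) else 0)]
  rw [Fintype.sum_prod_type]
  have heval : ∀ (y : (∀ i, A i)) (h : {t // t ≠ s} → (∀ i, A i)),
      ((Equiv.funSplitAt s (∀ i, A i)).symm (y, h)) s = y := by
    intro y h; simp [Equiv.funSplitAt, Equiv.piSplitAt]
  have hprod : ∀ (y : (∀ i, A i)) (h : {t // t ≠ s} → (∀ i, A i)),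
      ∏ t : S, (πC t) (((Equiv.funSplitAt s (∀ i, A i)).symm (y, h)) t)
        = (πC s) y * ∏ t : {t // t ≠ s}, (πC t) (h t) := by
    intro y h
    rw [← Finset.mul_prod_erase Finset.univ _ (Finset.mem_univ s), heval]
    congr 1
    rw [Finset.prod_subtype (Finset.univ.erase s) (p := fun t => t ≠ s) (by simp)]
    refine Finset.prod_congr rfl fun t _ => ?_
    simp [Equiv.funSplitAt, Equiv.piSplitAt, t.2]
  calc ∑ y : (∀ i, A i), ∑ h : {t // t ≠ s} → (∀ i, A i),
        (if a = ((Equiv.funSplitAt s (∀ i, A i)).symm (y, h)) s then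
          ∏ t : S, (πC t) (((Equiv.funSplitAt s (∀ i, A i)).symm (y, h)) t) else 0)
      = ∑ y : (∀ i, A i), ∑ h : {t // t ≠ s} → (∀ i, A i),
        (if a = y then (πC s) y * ∏ t : {t // t ≠ s}, (πC t) (h t) else 0) := by
        refine Finset.sum_congr rfl fun y _ => Finset.sum_congr rfl fun h _ => ?_
        rw [heval, hprod]
    _ = ∑ y : (∀ i, A i), (if a = y then (πC s) y *
          ∑ h : {t // t ≠ s} → (∀ i, A i), ∏ t : {t // t ≠ s}, (πC t) (h t) else 0) := by
        refine Finset.sum_congr rfl fun y _ => ?_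
        split_ifs
        · rw [Finset.mul_sum]
        · simp
    _ = (πC s) a := by
        rw [← Fintype.prod_sum (fun (t : {t // t ≠ s}) (x : (∀ i, A i)) => (πC t) x)]
        simp [hsum1]
end

section
/- Let S be a finite nonempty state space and A_1, ..., A_n finite nonempty action sets. The set Π^S of joint policies induced by signal-instructed deterministic decentralized policies — i.e., the set of functions of the form s ↦ (pushforward of p under z ↦ (f_1(s,z), ..., f_n(s,z))) for some signal space Z, some p ∈ PMF(Z), and some deterministic maps f_i : S × Z → A_i — is equal to the set Π^C of all centralized joint policies, i.e., all functions S → PMF(A_1 × ⋯ × A_n). -/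
open Finset in
private lemma sum_prod_pi_aux {ι : Type*} [Fintype ι] [DecidableEq ι]
    {β : ι → Type*} [∀ i, Fintype (β i)] (f : ∀ i, β i → ENNReal) :
    ∑ g : ∀ i, β i, ∏ i, f i (g i) = ∏ i, ∑ b, f i b := by
  rw [Finset.prod_univ_sum]
  rw [← Fintype.piFinset_univ]

/-- The set of joint policies induced by signal-instructed deterministic
decentralized policies equals the set of all centralized joint policies
`S → PMF (∀ i, A i)`. -/
theorem signal_policy_space_eq_centralized
    (S : Type*) [Fintype S] [Nonempty S]
    (n : ℕ) (A : Fin n → Type*) [∀ i, Fintype (A i)] [∀ i, Nonempty (A i)] :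
    {π : S → PMF (∀ i, A i) |
        ∃ (Z : Type) (_ : Fintype Z) (p : PMF Z) (f : ∀ i : Fin n, S → Z → A i),
          π = fun s => p.map (fun z => fun i => f i s z)} =
      (Set.univ : Set (S → PMF (∀ i, A i))) := by
  classical
  ext π
  simp only [Set.mem_setOf_eq, Set.mem_univ, iff_true]
  have hnorm : ∑ g : S → (∀ i, A i), ∏ s, π s (g s) = 1 := by
    rw [sum_prod_pi_aux (fun s b => π s b)]
    exact Finset.prod_eq_one fun s _ => by
      rw [← tsum_fintype (L := SummationFilter.unconditional _)]; exact (π s).tsum_coe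
  let q : PMF (S → ∀ i, A i) := PMF.ofFintype (fun g => ∏ s, π s (g s)) hnorm
  have key : ∀ s : S, q.map (fun g => g s) = π s := by
    intro s
    ext a
    rw [PMF.map_apply, tsum_fintype]
    have hq : ∀ g : S → (∀ i, A i), q g = ∏ t, π t (g t) := fun g => rfl
    simp only [hq]
    set e2 := Equiv.piSplitAt s (fun _ : S => ∀ i, A i) with he2
    rw [← Equiv.sum_comp e2.symm (fun g => if a = g s then ∏ t, π t (g t) else 0)]
    have hs : ∀ x : (∀ i, A i) × ({ t // t ≠ s } → ∀ i, A i), (e2.symm x) s = x.1 := by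
      intro x; simp [he2, Equiv.piSplitAt]
    have ht : ∀ (x : (∀ i, A i) × ({ t // t ≠ s } → ∀ i, A i)) (t : { t // t ≠ s }),
        (e2.symm x) t = x.2 t := by
      rintro x ⟨t, htt⟩; simp [he2, Equiv.piSplitAt, htt]
    have hprod : ∀ x : (∀ i, A i) × ({ t // t ≠ s } → ∀ i, A i),
        ∏ t, π t ((e2.symm x) t) = π s x.1 * ∏ t : { t // t ≠ s }, π t (x.2 t) := by
      intro x
      rw [← Finset.mul_prod_erase Finset.univ _ (Finset.mem_univ s), hs]
      congr 1
      rw [Finset.prod_subtype (p := fun t => t ≠ s) (Finset.univ.erase s)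
        (fun t => by simp [Finset.mem_erase]) (fun t => π t ((e2.symm x) t))]
      exact Finset.prod_congr rfl fun t _ => by rw [ht]
    have hsub : ∑ h : { t // t ≠ s } → ∀ i, A i,
        ∏ t : { t // t ≠ s }, π t (h t) = 1 := by
      rw [sum_prod_pi_aux (fun (t : { t // t ≠ s }) b => π t b)]
      exact Finset.prod_eq_one fun t _ => by
        rw [← tsum_fintype (L := SummationFilter.unconditional _)]; exact (π t).tsum_coe
    calc ∑ x : (∀ i, A i) × ({ t // t ≠ s } → ∀ i, A i),
          (if a = (e2.symm x) s then ∏ t, π t ((e2.symm x) t) else 0)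
        = ∑ b : ∀ i, A i, ∑ h : { t // t ≠ s } → ∀ i, A i,
            (if a = b then π s b * ∏ t : { t // t ≠ s }, π t (h t) else 0) := by
          rw [Fintype.sum_prod_type]
          exact Finset.sum_congr rfl fun b _ => Finset.sum_congr rfl fun h _ => by
            rw [hs ⟨b, h⟩, hprod ⟨b, h⟩]
      _ = ∑ b : ∀ i, A i,
            (if a = b then π s b * ∑ h : { t // t ≠ s } → ∀ i, A i,
              ∏ t : { t // t ≠ s }, π t (h t) else 0) := by
          refine Finset.sum_congr rfl fun b _ => ?_
          by_cases hab : a = b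
          · simp [hab, Finset.mul_sum]
          · simp [hab]
      _ = π s a := by simp [hsub]
  refine ⟨Fin (Fintype.card (S → ∀ i, A i)), inferInstance,
    q.map (Fintype.equivFin (S → ∀ i, A i)),
    fun i s z => ((Fintype.equivFin (S → ∀ i, A i)).symm z) s i, ?_⟩
  funext s
  rw [PMF.map_comp]
  have : ((fun z => fun i => ((Fintype.equivFin (S → ∀ i, A i)).symm z) s i) ∘
      (Fintype.equivFin (S → ∀ i, A i))) = fun g => g s := by
    funext g; simp
  rw [this, key]
end
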